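/- Let p : U → (ℝⁿ →ₗ[ℝ] ℝⁿ →ₗ[ℝ] ℝ) be a smooth pairing and A⁺, A⁻ : U → (ℝⁿ →ₗ[ℝ] ℝⁿ →ₗ[ℝ] ℝⁿ) smooth connection forms that are mutually dual with respect to p. Then for every x ∈ U and all v, w, a, b ∈ ℝⁿ: p x (R_{A⁺}(x)(v,w) a) b + p x a (R_{A⁻}(x)(v,w) b) = 0. (Paper's Proposition 3.17: the curvatures of a pair of dual connections pair to zero, in a trivialization.) -/

import Mathlib

set_option maxHeartbeats 1000000
set_option synthInstance.maxHeartbeats 400000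


noncomputable section

open Set

/-- ℝⁿ. -/
abbrev Vn (n : ℕ) : Type := Fin n → ℝ

/-- Pairings (fiber metrics pairing `E⁺` with `E⁻`) on the trivialized bundle. -/
abbrev Pairn (n : ℕ) : Type := Vn n →L[ℝ] Vn n →L[ℝ] ℝ

/-- Connection forms on the trivialized bundle. -/
abbrev Connn (n : ℕ) : Type := Vn n →L[ℝ] Vn n →L[ℝ] Vn n

/-- Bundle maps `TU → E±` in the trivialization. -/
abbrev Bdln (n : ℕ) : Type := Vn n →L[ℝ] Vn n

/-- Covariant derivative of the section `ν` along the vector field `X`,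
for the connection with connection form `A`. -/
def cov {n : ℕ} (A : Vn n → Connn n) (X ν : Vn n → Vn n) (x : Vn n) : Vn n :=
  fderiv ℝ ν x (X x) + A x (X x) (ν x)

/-- Lie bracket of vector fields on an open set of ℝⁿ. -/
def lieB {n : ℕ} (X Y : Vn n → Vn n) (x : Vn n) : Vn n :=
  fderiv ℝ Y x (X x) - fderiv ℝ X x (Y x)

/-- The section `Φ±Y : x ↦ Φ± x (Y x)`. -/
def secPhi {n : ℕ} (Φ : Vn n → Bdln n) (Y : Vn n → Vn n) : Vn n → Vn n :=
  fun x => Φ x (Y x)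

/-- The induced (possibly degenerate) metric `h x y z = 2 p x (Φ⁺ x y) (Φ⁻ x z)`. -/
def hmet {n : ℕ} (p : Vn n → Pairn n) (Φp Φm : Vn n → Bdln n) (x y z : Vn n) : ℝ :=
  2 * p x (Φp x y) (Φm x z)

/-- The generalized Amari–Chentsov cubic tensor. -/
def Ctensor {n : ℕ} (p : Vn n → Pairn n) (Ap Am : Vn n → Connn n)
    (Φp Φm : Vn n → Bdln n) (X Y Z : Vn n → Vn n) (x : Vn n) : ℝ :=
  -2 * (p x (cov Ap X (secPhi Φp Y) x) (Φm x (Z x))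
        - p x (Φp x (Z x)) (cov Am X (secPhi Φm Y) x))

/-- The relative torsion `T(X,Y) = ∇_X(ΦY) − ∇_Y(ΦX) − Φ[X,Y]`. -/
def Ttor {n : ℕ} (A : Vn n → Connn n) (Φ : Vn n → Bdln n)
    (X Y : Vn n → Vn n) (x : Vn n) : Vn n :=
  cov A X (secPhi Φ Y) x - cov A Y (secPhi Φ X) x - Φ x (lieB X Y x)

/-- The Kossowski pseudo-connection. -/
def Koss {n : ℕ} (p : Vn n → Pairn n) (Φp Φm : Vn n → Bdln n)
    (X Y Z : Vn n → Vn n) (x : Vn n) : ℝ :=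
  fderiv ℝ (fun y => p y (Φp y (Y y)) (Φm y (Z y))) x (X x)
  + fderiv ℝ (fun y => p y (Φp y (Z y)) (Φm y (X y))) x (Y x)
  - fderiv ℝ (fun y => p y (Φp y (X y)) (Φm y (Y y))) x (Z x)
  - p x (Φp x (X x)) (Φm x (lieB Y Z x))
  + p x (Φp x (Y x)) (Φm x (lieB Z X x))
  + p x (Φp x (Z x)) (Φm x (lieB X Y x))

/-- The curvature of a connection form `A` at `x` in directions `v`, `w`. -/
def curvA {n : ℕ} (A : Vn n → Connn n) (x v w : Vn n) : Vn n →L[ℝ] Vn n :=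
  fderiv ℝ A x v w - fderiv ℝ A x w v + (A x v).comp (A x w) - (A x w).comp (A x v)

/-- Paper's Proposition 3.17 (in a trivialization): the curvatures of a pair of
mutually dual connections pair to zero:
`p x (R_{A⁺}(x)(v,w) a) b + p x a (R_{A⁻}(x)(v,w) b) = 0`. -/
theorem statement11 {n : ℕ} (U : Set (Vn n)) (hUopen : IsOpen U)
    (p : Vn n → Pairn n) (hpsmooth : ContDiffOn ℝ (⊤ : ℕ∞) p U)
    (Ap Am : Vn n → Connn n)
    (hApsmooth : ContDiffOn ℝ (⊤ : ℕ∞) Ap U) (hAmsmooth : ContDiffOn ℝ (⊤ : ℕ∞) Am U)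
    (hdual : ∀ x ∈ U, ∀ v a b : Vn n,
      fderiv ℝ p x v a b = p x (Ap x v a) b + p x a (Am x v b)) :
    ∀ x ∈ U, ∀ v w a b : Vn n,
      p x (curvA Ap x v w a) b + p x a (curvA Am x v w b) = 0 := by

  intro x hx v w a b
  letI : NormedAddCommGroup (Pairn n) := inferInstance
  letI : NormedSpace ℝ (Pairn n) := inferInstance
  have hmem : U ∈ nhds x := hUopen.mem_nhds hx
  have hp : ContDiffAt ℝ (⊤ : ℕ∞) p x := (hpsmooth x hx).contDiffAt hmem
  have hAp : ContDiffAt ℝ (⊤ : ℕ∞) Ap x := (hApsmooth x hx).contDiffAt hmem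
  have hAm : ContDiffAt ℝ (⊤ : ℕ∞) Am x := (hAmsmooth x hx).contDiffAt hmem
  have hpd : DifferentiableAt ℝ p x := hp.differentiableAt (by simp)
  have hApd : DifferentiableAt ℝ Ap x := hAp.differentiableAt (by simp)
  have hAmd : DifferentiableAt ℝ Am x := hAm.differentiableAt (by simp)
  have hFc : ContDiffAt ℝ (⊤ : ℕ∞) (fderiv ℝ p) x := hp.fderiv_right (m := ((⊤ : ℕ∞) : WithTop ℕ∞)) (by exact_mod_cast (le_top : (⊤+1:ℕ∞) ≤ ⊤))
  have hFd : DifferentiableAt ℝ (fderiv ℝ p) x := hFc.differentiableAt (by simp)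
  -- key identity from differentiating the duality relation
  have key : ∀ v' w' : Vn n, fderiv ℝ (fderiv ℝ p) x w' v' a b
      = fderiv ℝ p x w' (Ap x v' a) b + p x (fderiv ℝ Ap x w' v' a) b
        + (fderiv ℝ p x w' a (Am x v' b) + p x a (fderiv ℝ Am x w' v' b)) := by
    intro v' w'
    have hEE : (fun y => fderiv ℝ p y v' a b)
        =ᶠ[nhds x] (fun y => p y (Ap y v' a) b + p y a (Am y v' b)) := by
      filter_upwards [hmem] with y hy
      exact hdual y hy v' a b
    have hL := ((hFd.hasFDerivAt.clm_apply (hasFDerivAt_const v' x)).clm_apply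
        (hasFDerivAt_const a x)).clm_apply (hasFDerivAt_const b x)
    have hApva := (hApd.hasFDerivAt.clm_apply (hasFDerivAt_const v' x)).clm_apply
        (hasFDerivAt_const a x)
    have hAmvb := (hAmd.hasFDerivAt.clm_apply (hasFDerivAt_const v' x)).clm_apply
        (hasFDerivAt_const b x)
    have h1 := hpd.hasFDerivAt.clm_apply hApva
    have hR1 := h1.clm_apply (hasFDerivAt_const b x)
    have h2 := hpd.hasFDerivAt.clm_apply (hasFDerivAt_const a x)
    have hR2 := h2.clm_apply hAmvb
    have hR := HasFDerivAt.fun_add hR1 hR2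
    have hfe := hEE.fderiv_eq (𝕜 := ℝ)
    rw [hL.fderiv, hR.fderiv] at hfe
    have h := DFunLike.congr_fun hfe w'
    have h2s := h; simp only [ContinuousLinearMap.add_apply, ContinuousLinearMap.comp_apply, ContinuousLinearMap.flip_apply, ContinuousLinearMap.zero_apply, map_zero, ContinuousLinearMap.coe_comp', Function.comp_apply, zero_add, add_zero] at h2s; linarith [h2s]
  have symm : ∀ v' w' : Vn n, fderiv ℝ (fderiv ℝ p) x v' w'
      = fderiv ℝ (fderiv ℝ p) x w' v' := by
    intro v' w'
    exact (hp.isSymmSndFDerivAt (by rw [minSmoothness_of_isRCLikeNormedField]; exact WithTop.coe_le_coe.2 le_top)).eq v' w'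
  have kvw := key v w
  have kwv := key w v
  rw [symm v w] at kwv
  have e := kvw.symm.trans kwv
  have d1 := hdual x hx w (Ap x v a) b
  have d2 := hdual x hx v (Ap x w a) b
  have d3 := hdual x hx w a (Am x v b)
  have d4 := hdual x hx v a (Am x w b)
  simp only [curvA, ContinuousLinearMap.sub_apply, ContinuousLinearMap.add_apply,
    ContinuousLinearMap.coe_comp', Function.comp_apply, map_sub, map_add]
  linarith [e, d1, d2, d3, d4]
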